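/- Let $D_1, D_2$ be positive integers with $D_1 \mid D_2$, $D_1 > 1$, and such that every prime dividing $D_1$ divides $D_2$ and conversely. Let $S_1$ denote the subsum of the GL(3) Kloosterman sum $S(m_1, m_2, n_1, n_2; D_1, D_2)$ restricted to terms with $\gcd(B_1, D_1) = 1$. Then $S_1 = S(0, m_1; D_1) \cdot S(m_2 D_1, n_2; D_2)$, where $S(0, m; c)$ is a Ramanujan sum and $S(a, b; c)$ a classical Kloosterman sum. -/

import Mathlib

open Finset

/-- `e(x) = e^{2πix}`. -/
noncomputable def efn (x : ℝ) : ℂ := Complex.exp (2 * Real.pi * Complex.I * x)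

/-- Classical Kloosterman sum `S(a,b;c) = ∑_{x mod c, (x,c)=1} e((ax + b x̄)/c)`. -/
noncomputable def Kl (a b : ℤ) (c : ℕ) : ℂ :=
  ∑ x ∈ Finset.range c, if Nat.gcd x c = 1 then
    efn (((a * x + b * (((x : ZMod c)⁻¹).val : ℤ) : ℤ) : ℝ) / c) else 0

def Ycoef (B C D : ℕ) : ℤ := Nat.gcdA B (Nat.gcd C D)
def Zcoef (B C D : ℕ) : ℤ := Nat.gcdB B (Nat.gcd C D) * Nat.gcdA C D

/-- The subsum `S₁` of the GL(3) Kloosterman sum restricted to terms with `gcd(B₁,D₁)=1`. -/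
noncomputable def S1sub (m1 m2 n1 n2 : ℤ) (D1 D2 : ℕ) : ℂ :=
  ∑ B1 ∈ Finset.range D1, ∑ C1 ∈ Finset.range D1,
  ∑ B2 ∈ Finset.range D2, ∑ C2 ∈ Finset.range D2,
    if Nat.gcd B1 D1 = 1 ∧
       Nat.gcd B1 (Nat.gcd C1 D1) = 1 ∧ Nat.gcd B2 (Nat.gcd C2 D2) = 1 ∧
       (D1 * D2) ∣ (D1 * C2 + B1 * B2 + D2 * C1) then
      efn ((((m1 * B1 + n1 * (Ycoef B1 C1 D1 * D2 - Zcoef B1 C1 D1 * B2)) : ℤ) : ℝ) / D1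
        + (((m2 * B2 + n2 * (Ycoef B2 C2 D2 * D1 - Zcoef B2 C2 D2 * B1)) : ℤ) : ℝ) / D2)
    else 0

lemma YZ (B C D : ℕ) (h : Nat.gcd B (Nat.gcd C D) = 1) :
    (D:ℤ) ∣ (Ycoef B C D * B + Zcoef B C D * C - 1) := by
  have h1 := Nat.gcd_eq_gcd_ab B (Nat.gcd C D)
  have h2 := Nat.gcd_eq_gcd_ab C D
  rw [h] at h1
  refine ⟨-(Nat.gcdB B (Nat.gcd C D) * Nat.gcdB C D), ?_⟩
  unfold Ycoef Zcoef
  push_cast at h1 ⊢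
  linear_combination -h1 - (Nat.gcdB B (Nat.gcd C D)) * h2

section helpers
variable {n : ℕ} [NeZero n]
lemma valcast (a : ZMod n) : ((a.val : ZMod n)) = a := ZMod.natCast_rightInverse a
omit [NeZero n] in
lemma unit_of_gcd {x : ℕ} (h : Nat.gcd x n = 1) : IsUnit (x : ZMod n) :=
  (ZMod.isUnit_iff_coprime x n).mpr h
lemma gcd_of_unit {a : ZMod n} (h : IsUnit a) : Nat.gcd a.val n = 1 :=
  (ZMod.isUnit_iff_coprime a.val n).mp (by rwa [valcast])
omit [NeZero n] in
lemma unit_inv {a : ZMod n} (h : IsUnit a) : IsUnit a⁻¹ :=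
  IsUnit.of_mul_eq_one _ (ZMod.inv_mul_of_unit a h)
omit [NeZero n] in
lemma zmod_inv_eq {a b : ZMod n} (h : a * b = 1) : a⁻¹ = b := by
  have hu : IsUnit a := IsUnit.of_mul_eq_one _ h
  have e2 : a⁻¹ * (a * b) = a⁻¹ := by rw [h, mul_one]
  calc a⁻¹ = a⁻¹ * (a * b) := e2.symm
    _ = (a⁻¹ * a) * b := by ring
    _ = b := by rw [ZMod.inv_mul_of_unit a hu, one_mul]
omit [NeZero n] in
lemma inv_inv_unit {a : ZMod n} (h : IsUnit a) : a⁻¹⁻¹ = a :=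
  zmod_inv_eq (by rw [mul_comm]; exact ZMod.mul_inv_of_unit a h)

end helpers

lemma modeq_int_of_zmod_eq {c : ℕ} {a b : ℕ} (h : (a : ZMod c) = b) : (c:ℤ) ∣ (a:ℤ) - b := by
  have h2 := (ZMod.natCast_eq_natCast_iff a b c).mp h
  exact (dvd_sub_comm).mp h2.dvd

lemma coprime_transfer {a D1 D2 : ℕ} (hsame : ∀ p : ℕ, p.Prime → (p ∣ D2 → p ∣ D1))
    (h : Nat.gcd a D1 = 1) : Nat.gcd a D2 = 1 := by
  by_contra hne
  obtain ⟨p, pp, hpdvd⟩ := Nat.exists_prime_and_dvd hne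
  have h1 : p ∣ a := hpdvd.trans (Nat.gcd_dvd_left _ _)
  have h2 : p ∣ D2 := hpdvd.trans (Nat.gcd_dvd_right _ _)
  have h4 : p ∣ 1 := h ▸ Nat.dvd_gcd h1 (hsame p pp h2)
  exact pp.one_lt.ne' (Nat.eq_one_of_dvd_one h4) |>.elim

lemma efn_add (x y : ℝ) : efn (x + y) = efn x * efn y := by
  unfold efn; rw [← Complex.exp_add]; congr 1; push_cast; ring

lemma efn_int (n : ℤ) : efn n = 1 := by
  unfold efn
  have : (2 * Real.pi * Complex.I * (n:ℝ)) = (n:ℤ) * (2 * Real.pi * Complex.I) := by push_cast; ring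
  rw [this, Complex.exp_int_mul_two_pi_mul_I]

lemma efn_congr {c : ℕ} (hc : c ≠ 0) {a b : ℤ} (h : (c:ℤ) ∣ (a - b)) :
    efn ((a:ℝ)/c) = efn ((b:ℝ)/c) := by
  obtain ⟨k, hk⟩ := h
  have hceq : (a:ℝ)/c = (b:ℝ)/c + (k:ℤ) := by
    have hc' : (c:ℝ) ≠ 0 := Nat.cast_ne_zero.mpr hc
    field_simp
    have : (a:ℝ) - b = c * k := by exact_mod_cast congrArg (Int.cast : ℤ → ℝ) hk
    linarith
  rw [hceq, efn_add, efn_int, mul_one]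

set_option maxHeartbeats 1000000 in
lemma master (D1 e : ℕ) [NeZero D1] [NeZero (D1 * e)]
    (hsame : ∀ p : ℕ, p.Prime → (p ∣ (D1 * e) → p ∣ D1))
    (m1 m2 n1 n2 : ℤ) (B1 : ℕ) (hB1 : Nat.gcd B1 D1 = 1)
    (C1 B2 C2 : ℕ) (hC1 : C1 < D1) (hB2 : B2 < D1 * e) (hC2 : C2 < D1 * e)
    (hg2 : Nat.gcd B2 (Nat.gcd C2 (D1 * e)) = 1)
    (hdv : (D1 * (D1 * e)) ∣ (D1 * C2 + B1 * B2 + (D1 * e) * C1)) :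
    let x : ℕ := ((-(C2 : ZMod (D1 * e))) * (B1 : ZMod (D1 * e))⁻¹).val
    x < D1 * e ∧ Nat.gcd x (D1 * e) = 1 ∧
    (B1 * (x / e)) % D1 = C1 ∧ D1 * (x % e) = B2 ∧
    ((-((B1 : ZMod (D1 * e)) * (x : ZMod (D1 * e)))).val = C2) ∧
    ((D1:ℤ) ∣ ((m1 * B1 + n1 * (Ycoef B1 C1 D1 * (D1 * e) - Zcoef B1 C1 D1 * B2)) - m1 * B1)) ∧
    ((((D1 : ℕ) * e : ℕ):ℤ) ∣ ((m2 * B2 + n2 * (Ycoef B2 C2 (D1*e) * D1 - Zcoef B2 C2 (D1*e) * B1))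
        - ((m2 * D1) * x + n2 * (((x : ZMod (D1*e))⁻¹).val : ℤ)))) := by
  intro x
  have hD1 : 0 < D1 := Nat.pos_of_ne_zero (NeZero.ne D1)
  have he : 0 < e := by
    rcases Nat.eq_zero_or_pos e with h | h
    · exact absurd (by rw [h, Nat.mul_zero]) (NeZero.ne (D1 * e))
    · exact h
  set D2 := D1 * e with hD2
  -- D1 divides B2
  have f1 : D1 ∣ B2 := by
    have h5 : D1 ∣ D1 * C2 + B1 * B2 + D2 * C1 := (Dvd.intro D2 rfl).trans hdv
    have h6 : D1 ∣ B1 * B2 := by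
      have hb : D1 ∣ D1 * C2 + D2 * C1 :=
        Nat.dvd_add (Dvd.intro _ rfl) (by rw [hD2, mul_assoc]; exact Dvd.intro _ rfl)
      have := Nat.dvd_sub h5 hb
      have heq : D1 * C2 + B1 * B2 + D2 * C1 - (D1 * C2 + D2 * C1) = B1 * B2 := by omega
      rwa [heq] at this
    exact (Nat.Coprime.dvd_mul_left (Nat.coprime_comm.mp hB1)).mp h6
  -- C2 is coprime to D2
  have f2 : Nat.gcd C2 D2 = 1 := by
    by_contra hne
    obtain ⟨p, pp, hpdvd⟩ := Nat.exists_prime_and_dvd hne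
    have h1 : p ∣ C2 := hpdvd.trans (Nat.gcd_dvd_left _ _)
    have h2 : p ∣ D2 := hpdvd.trans (Nat.gcd_dvd_right _ _)
    have h3 : p ∣ B2 := (hsame p pp h2).trans f1
    have h4 : p ∣ 1 := hg2 ▸ Nat.dvd_gcd h3 (Nat.dvd_gcd h1 h2)
    exact pp.one_lt.ne' (Nat.eq_one_of_dvd_one h4) |>.elim
  have hB1D2 : Nat.gcd B1 D2 = 1 := coprime_transfer hsame hB1
  have f3 : IsUnit (B1 : ZMod D2) := unit_of_gcd hB1D2
  have f4 : IsUnit (C2 : ZMod D2) := unit_of_gcd f2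
  have hβ : (B1 : ZMod D2) * (B1 : ZMod D2)⁻¹ = 1 := ZMod.mul_inv_of_unit _ f3
  have hγ : (C2 : ZMod D2) * (C2 : ZMod D2)⁻¹ = 1 := ZMod.mul_inv_of_unit _ f4
  have hxlt : x < D2 := ZMod.val_lt _
  have hxcast : (x : ZMod D2) = -(C2 : ZMod D2) * (B1 : ZMod D2)⁻¹ := valcast _
  have hxunit : IsUnit (x : ZMod D2) := by
    rw [hxcast]; exact (f4.neg).mul (unit_inv f3)
  have hxgcd : Nat.gcd x D2 = 1 := by
    have := gcd_of_unit (n := D2) (a := (-(C2 : ZMod D2)) * (B1 : ZMod D2)⁻¹)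
      ((f4.neg).mul (unit_inv f3))
    exact this
  clear_value x
  -- mod D2 relation
  have hrel : (D1 : ZMod D2) * (C2 : ZMod D2) + (B1 : ZMod D2) * (B2 : ZMod D2) = 0 := by
    have hdd : D2 ∣ D1 * C2 + B1 * B2 + D2 * C1 := (dvd_mul_left D2 D1).trans hdv
    have h0 : ((D1 * C2 + B1 * B2 + D2 * C1 : ℕ) : ZMod D2) = 0 :=
      (ZMod.natCast_eq_zero_iff _ _).mpr hdd
    push_cast at h0
    have hz : (D2 : ZMod D2) = 0 := ZMod.natCast_self _
    rw [hz] at h0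
    linear_combination h0
  -- B2 ≡ D1 x (mod D2)
  have hB2x : (B2 : ZMod D2) = (D1 : ZMod D2) * (x : ZMod D2) := by
    rw [hxcast]
    linear_combination (B1 : ZMod D2)⁻¹ * hrel - (B2 : ZMod D2) * hβ
  -- Bezout identity for (B2, C2, D2) in ZMod D2
  have hYZ2 : ((Ycoef B2 C2 D2 : ℤ) : ZMod D2) * (B2 : ZMod D2)
      + ((Zcoef B2 C2 D2 : ℤ) : ZMod D2) * (C2 : ZMod D2) = 1 := by
    have h0 : (((Ycoef B2 C2 D2 * B2 + Zcoef B2 C2 D2 * C2 - 1 : ℤ)) : ZMod D2) = 0 :=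
      (ZMod.intCast_zmod_eq_zero_iff_dvd _ _).mpr (YZ B2 C2 D2 hg2)
    push_cast at h0
    linear_combination h0
  -- the key identity for the Y,Z exponent
  have hmul : (C2 : ZMod D2) * (((Ycoef B2 C2 D2 : ℤ) : ZMod D2) * (D1 : ZMod D2)
      - ((Zcoef B2 C2 D2 : ℤ) : ZMod D2) * (B1 : ZMod D2)) = -(B1 : ZMod D2) := by
    linear_combination ((Ycoef B2 C2 D2 : ℤ) : ZMod D2) * hrel - (B1 : ZMod D2) * hYZ2
  have hxinv : ((x : ZMod D2))⁻¹ = -(C2 : ZMod D2)⁻¹ * (B1 : ZMod D2) := by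
    apply zmod_inv_eq
    rw [hxcast]
    linear_combination ((B1 : ZMod D2)⁻¹ * (B1 : ZMod D2)) * hγ + hβ
  set xb : ℕ := ((x : ZMod D2)⁻¹).val with hxb
  have hxbcast : ((xb : ℕ) : ZMod D2) = -(C2 : ZMod D2)⁻¹ * (B1 : ZMod D2) := by
    rw [hxb, valcast, hxinv]
  clear_value xb
  have hYZB : ((Ycoef B2 C2 D2 : ℤ) : ZMod D2) * (D1 : ZMod D2)
      - ((Zcoef B2 C2 D2 : ℤ) : ZMod D2) * (B1 : ZMod D2) = ((xb : ℕ) : ZMod D2) := by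
    rw [hxbcast]
    linear_combination (C2 : ZMod D2)⁻¹ * hmul
      - (((Ycoef B2 C2 D2 : ℤ) : ZMod D2) * (D1 : ZMod D2)
        - ((Zcoef B2 C2 D2 : ℤ) : ZMod D2) * (B1 : ZMod D2)) * hγ
  -- component g3
  have g3 : (-((B1 : ZMod D2) * (x : ZMod D2))).val = C2 := by
    have h : -((B1 : ZMod D2) * (x : ZMod D2)) = (C2 : ZMod D2) := by
      rw [hxcast]; linear_combination (C2 : ZMod D2) * hβ
    rw [h, ZMod.val_cast_of_lt hC2]
  -- component g2
  set u : ℕ := x / e with hu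
  set r : ℕ := x % e with hr
  have hdivmod : e * u + r = x := Nat.div_add_mod x e
  have hxe : r < e := Nat.mod_lt _ he
  clear_value u r
  have hlt : D1 * r < D1 * e := by nlinarith [hxe, hD1]
  have hdvB2 : (↑D2 : ℤ) ∣ (B2 : ℤ) - D1 * x := by
    apply modeq_int_of_zmod_eq (a := B2) (b := D1 * x)
    push_cast
    exact hB2x
  have hD2c : ((D2 : ℕ) : ℤ) = (D1 : ℤ) * e := by rw [hD2]; push_cast; ring
  have eq3 : (x : ℤ) = (e : ℤ) * (u : ℤ) + (r : ℤ) := by exact_mod_cast hdivmod.symm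
  have g2 : D1 * r = B2 := by
    obtain ⟨k, hk⟩ := hdvB2
    rw [hD2c] at hk
    have hq : (D1 : ℤ) * e * ((u : ℤ) + k) = (B2 : ℤ) - D1 * r := by
      linear_combination -hk - (D1 : ℤ) * eq3
    have hB2i : (0 : ℤ) ≤ (B2:ℤ) ∧ (B2 : ℤ) < (D1:ℤ) * e := by
      constructor
      · exact Int.natCast_nonneg _
      · have h9 := hB2; rw [hD2] at h9; exact_mod_cast h9
    have hmi : (0 : ℤ) ≤ (D1 : ℤ) * r ∧ (D1 : ℤ) * r < (D1:ℤ) * e := by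
      constructor
      · positivity
      · exact_mod_cast hlt
    have hq0 : (u : ℤ) + k = 0 := by
      by_contra hne
      rcases lt_or_gt_of_ne hne with hlt' | hgt
      · have : (D1 : ℤ) * e * ((u : ℤ) + k) ≤ (D1 : ℤ) * e * (-1) := by
          apply mul_le_mul_of_nonneg_left (by omega) (by positivity)
        nlinarith [hB2i.1, hB2i.2, hmi.1, hmi.2]
      · have : (D1 : ℤ) * e * 1 ≤ (D1 : ℤ) * e * ((u : ℤ) + k) := by
          apply mul_le_mul_of_nonneg_left (by omega) (by positivity)
        nlinarith [hB2i.1, hB2i.2, hmi.1, hmi.2]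
    have hfin : (D1 : ℤ) * r = (B2 : ℤ) := by
      rw [hq0, mul_zero] at hq; linarith [hq]
    exact_mod_cast hfin
  -- component g1
  have g1 : (B1 * u) % D1 = C1 := by
    have h2 : ((x * B1 + C2 : ℕ) : ZMod D2) = ((0 : ℕ) : ZMod D2) := by
      push_cast
      rw [hxcast]
      linear_combination (-(C2 : ZMod D2)) * hβ
    obtain ⟨k2v, hk2⟩ := modeq_int_of_zmod_eq h2
    obtain ⟨mm, hmm⟩ := hdv
    have hmm2 := hmm
    rw [hD2] at hmm2
    have hmm' : (D1 : ℤ) * C2 + (B1:ℤ) * B2 + ((D1:ℤ) * e) * C1 = (D1:ℤ) * ((D1:ℤ) * e) * mm := by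
      exact_mod_cast hmm2
    have hg2i : (D1 : ℤ) * r = (B2:ℤ) := by exact_mod_cast g2
    have hD1ne : (D1 : ℤ) ≠ 0 := by exact_mod_cast hD1.ne'
    have eq1 : (C2 : ℤ) + (B1:ℤ) * r + (e:ℤ) * C1 = (D1:ℤ) * e * mm := by
      apply mul_left_cancel₀ hD1ne
      linear_combination hmm' + (B1 : ℤ) * hg2i
    have k2' : (x : ℤ) * B1 + C2 = (D1:ℤ) * e * k2v := by
      rw [hD2c] at hk2
      push_cast at hk2
      linarith [hk2]
    have hene : (e : ℤ) ≠ 0 := by exact_mod_cast he.ne'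
    have key : (B1 : ℤ) * (u : ℤ) - (C1:ℤ) = (D1:ℤ) * (k2v - mm) := by
      apply mul_left_cancel₀ hene
      linear_combination k2' - eq1 - (B1 : ℤ) * eq3
    have hmodeq : (B1 * u) ≡ C1 [MOD D1] := by
      rw [Nat.modEq_iff_dvd]
      refine ⟨-(k2v - mm), ?_⟩
      push_cast
      linarith [key]
    have h10 := hmodeq
    rw [Nat.ModEq, Nat.mod_eq_of_lt hC1] at h10
    exact h10
  -- component g4
  have g4 : (D1 : ℤ) ∣ ((m1 * B1 + n1 * (Ycoef B1 C1 D1 * (D1 * e) - Zcoef B1 C1 D1 * B2)) - m1 * B1) := by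
    have hr : (m1 * B1 + n1 * (Ycoef B1 C1 D1 * ((D1 : ℤ) * e) - Zcoef B1 C1 D1 * B2)) - m1 * B1
        = n1 * (Ycoef B1 C1 D1 * ((D1 : ℤ) * e) - Zcoef B1 C1 D1 * B2) := by ring
    rw [hr]
    refine Dvd.dvd.mul_left (dvd_sub ?_ ?_) n1
    · exact Dvd.dvd.mul_left ⟨(e:ℤ), by ring⟩ _
    · exact (Int.natCast_dvd_natCast.mpr f1).mul_left _
  -- component g5
  have g5 : (((D1 * e : ℕ) : ℤ)) ∣ ((m2 * B2 + n2 * (Ycoef B2 C2 (D1*e) * D1 - Zcoef B2 C2 (D1*e) * B1))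
      - ((m2 * D1) * x + n2 * (xb : ℤ))) := by
    apply (ZMod.intCast_zmod_eq_zero_iff_dvd _ _).mp
    push_cast
    linear_combination (m2 : ZMod D2) * hB2x + (n2 : ZMod D2) * hYZB
  exact ⟨hxlt, hxgcd, g1, g2, g3, g4, g5⟩

set_option maxHeartbeats 1000000 in
lemma masterJ (D1 e : ℕ) [NeZero D1] [NeZero (D1 * e)]
    (B1 : ℕ) (hB1 : Nat.gcd B1 D1 = 1) (hB1D2 : Nat.gcd B1 (D1 * e) = 1)
    (x : ℕ) (hx : x < D1 * e) (hxg : Nat.gcd x (D1 * e) = 1) :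
    Nat.gcd (D1 * (x % e)) (Nat.gcd ((-((B1 : ZMod (D1*e)) * (x : ZMod (D1*e)))).val) (D1 * e)) = 1 ∧
    (D1 * (D1 * e)) ∣ (D1 * ((-((B1 : ZMod (D1*e)) * (x : ZMod (D1*e)))).val)
        + B1 * (D1 * (x % e)) + (D1 * e) * ((B1 * (x / e)) % D1)) := by
  have hD1 : 0 < D1 := Nat.pos_of_ne_zero (NeZero.ne D1)
  have he : 0 < e := by
    rcases Nat.eq_zero_or_pos e with h | h
    · exact absurd (by rw [h, Nat.mul_zero]) (NeZero.ne (D1 * e))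
    · exact h
  set D2 := D1 * e with hD2
  have f3 : IsUnit (B1 : ZMod D2) := unit_of_gcd hB1D2
  have hβ : (B1 : ZMod D2) * (B1 : ZMod D2)⁻¹ = 1 := ZMod.mul_inv_of_unit _ f3
  have hxu : IsUnit (x : ZMod D2) := unit_of_gcd hxg
  set C2 : ℕ := (-((B1 : ZMod D2) * (x : ZMod D2))).val with hC2
  have hC2cast : ((C2 : ℕ) : ZMod D2) = -((B1 : ZMod D2) * (x : ZMod D2)) := valcast _
  have hC2g : Nat.gcd C2 D2 = 1 := gcd_of_unit ((f3.mul hxu).neg)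
  clear_value C2
  set u : ℕ := x / e with hu
  set r : ℕ := x % e with hr
  have hdivmod : e * u + r = x := Nat.div_add_mod x e
  clear_value u r
  set C1 : ℕ := (B1 * u) % D1 with hC1def
  have hC1mod : (B1 * u) % D1 = C1 := rfl
  have hC1modeq : (B1 * u) % D1 ≡ B1 * u [MOD D1] := Nat.mod_modEq _ _
  clear_value C1
  constructor
  · rw [hC2g, Nat.gcd_one_right]
  · -- divisibility
    have k3 : (D2 : ℤ) ∣ ((C2 + B1 * x : ℕ) : ℤ) - ((0:ℕ) : ℤ) := by
      apply modeq_int_of_zmod_eq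
      push_cast
      rw [hC2cast]
      ring
    obtain ⟨c3, h3⟩ := k3
    have k4 : (D1 : ℤ) ∣ ((B1 * u : ℕ) : ℤ) - ((C1:ℕ) : ℤ) := by
      rw [← hC1mod]
      exact hC1modeq.dvd
    obtain ⟨c4, h4⟩ := k4
    have eqx : (x : ℤ) = (e:ℤ) * u + r := by exact_mod_cast hdivmod.symm
    have hint : ((D1 * (D1 * e) : ℕ) : ℤ) ∣ ((D1 * C2 + B1 * (D1 * r) + (D1 * e) * C1 : ℕ) : ℤ) := by
      refine ⟨c3 - c4, ?_⟩
      push_cast at h3 h4 ⊢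
      rw [hD2] at h3
      push_cast at h3
      linear_combination (D1:ℤ) * h3 - (D1:ℤ) * (e:ℤ) * h4 - (D1:ℤ) * (B1:ℤ) * eqx
    exact_mod_cast hint

set_option maxHeartbeats 1000000 in
lemma innerSumEq (D1 e : ℕ) [NeZero D1] [NeZero (D1 * e)]
    (hsame : ∀ p : ℕ, p.Prime → (p ∣ (D1 * e) → p ∣ D1))
    (m1 m2 n1 n2 : ℤ) (B1 : ℕ) (hB1 : Nat.gcd B1 D1 = 1) :
    (∑ C1 ∈ Finset.range D1, ∑ B2 ∈ Finset.range (D1 * e), ∑ C2 ∈ Finset.range (D1 * e),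
      if Nat.gcd B1 D1 = 1 ∧ Nat.gcd B1 (Nat.gcd C1 D1) = 1 ∧
         Nat.gcd B2 (Nat.gcd C2 (D1 * e)) = 1 ∧
         (D1 * (D1 * e)) ∣ (D1 * C2 + B1 * B2 + (D1 * e) * C1) then
        efn ((((m1 * B1 + n1 * (Ycoef B1 C1 D1 * ((D1 * e : ℕ) : ℤ) - Zcoef B1 C1 D1 * B2)) : ℤ) : ℝ) / D1
          + (((m2 * B2 + n2 * (Ycoef B2 C2 (D1 * e) * D1 - Zcoef B2 C2 (D1 * e) * B1)) : ℤ) : ℝ) / ((D1 * e : ℕ) : ℝ))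
      else 0)
    = ∑ x ∈ Finset.range (D1 * e), (if Nat.gcd x (D1 * e) = 1 then
        efn (((m1 * B1 : ℤ) : ℝ) / D1) *
        efn ((((m2 * ((D1:ℕ):ℤ)) * x + n2 * ((((x : ZMod (D1 * e))⁻¹).val : ℕ) : ℤ) : ℤ) : ℝ)
          / ((D1 * e : ℕ) : ℝ)) else 0) := by
  classical
  have hD1 : 0 < D1 := Nat.pos_of_ne_zero (NeZero.ne D1)
  have hD2ne : D1 * e ≠ 0 := NeZero.ne _
  have hB1D2 : Nat.gcd B1 (D1 * e) = 1 := coprime_transfer hsame hB1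
  rw [← Finset.sum_filter]
  have hL : (∑ C1 ∈ Finset.range D1, ∑ B2 ∈ Finset.range (D1 * e), ∑ C2 ∈ Finset.range (D1 * e),
      if Nat.gcd B1 D1 = 1 ∧ Nat.gcd B1 (Nat.gcd C1 D1) = 1 ∧
         Nat.gcd B2 (Nat.gcd C2 (D1 * e)) = 1 ∧
         (D1 * (D1 * e)) ∣ (D1 * C2 + B1 * B2 + (D1 * e) * C1) then
        efn ((((m1 * B1 + n1 * (Ycoef B1 C1 D1 * ((D1 * e : ℕ) : ℤ) - Zcoef B1 C1 D1 * B2)) : ℤ) : ℝ) / D1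
          + (((m2 * B2 + n2 * (Ycoef B2 C2 (D1 * e) * D1 - Zcoef B2 C2 (D1 * e) * B1)) : ℤ) : ℝ) / ((D1 * e : ℕ) : ℝ))
      else 0)
      = ∑ a ∈ ((Finset.range D1 ×ˢ (Finset.range (D1*e) ×ˢ Finset.range (D1*e))).filter
          (fun a : ℕ × ℕ × ℕ => Nat.gcd B1 D1 = 1 ∧ Nat.gcd B1 (Nat.gcd a.1 D1) = 1 ∧
            Nat.gcd a.2.1 (Nat.gcd a.2.2 (D1*e)) = 1 ∧
            (D1 * (D1*e)) ∣ (D1 * a.2.2 + B1 * a.2.1 + (D1*e) * a.1))),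
          efn ((((m1 * B1 + n1 * (Ycoef B1 a.1 D1 * ((D1 * e : ℕ) : ℤ) - Zcoef B1 a.1 D1 * a.2.1)) : ℤ) : ℝ) / D1
            + (((m2 * a.2.1 + n2 * (Ycoef a.2.1 a.2.2 (D1 * e) * D1 - Zcoef a.2.1 a.2.2 (D1 * e) * B1)) : ℤ) : ℝ) / ((D1 * e : ℕ) : ℝ)) := by
    rw [Finset.sum_filter, Finset.sum_product]
    refine Finset.sum_congr rfl fun C1 _ => ?_
    rw [Finset.sum_product]
  rw [hL]
  refine Finset.sum_nbij'
    (fun a : ℕ × ℕ × ℕ => ((-(a.2.2 : ZMod (D1*e))) * (B1 : ZMod (D1*e))⁻¹).val)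
    (fun x : ℕ => ((B1 * (x / e)) % D1, (D1 * (x % e), (-((B1 : ZMod (D1*e)) * (x : ZMod (D1*e)))).val)))
    ?_ ?_ ?_ ?_ ?_
  · -- hi
    rintro ⟨C1, B2, C2⟩ ha
    rw [Finset.mem_filter, Finset.mem_product, Finset.mem_product, Finset.mem_range,
      Finset.mem_range, Finset.mem_range] at ha
    obtain ⟨⟨hC1, hB2, hC2⟩, _, _, hg2, hdv⟩ := ha
    obtain ⟨hxlt, hxgcd, -, -, -, -, -⟩ :=
      master D1 e hsame m1 m2 n1 n2 B1 hB1 C1 B2 C2 hC1 hB2 hC2 hg2 hdv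
    rw [Finset.mem_filter, Finset.mem_range]
    exact ⟨hxlt, hxgcd⟩
  · -- hj
    rintro x hx
    rw [Finset.mem_filter, Finset.mem_range] at hx
    obtain ⟨hxlt, hxg⟩ := hx
    have he : 0 < e := by
      rcases Nat.eq_zero_or_pos e with h | h
      · exact absurd (by rw [h, Nat.mul_zero]) hD2ne
      · exact h
    obtain ⟨hgc, hdvc⟩ := masterJ D1 e B1 hB1 hB1D2 x hxlt hxg
    rw [Finset.mem_filter, Finset.mem_product, Finset.mem_product, Finset.mem_range,
      Finset.mem_range, Finset.mem_range]
    refine ⟨⟨Nat.mod_lt _ hD1, ?_, ZMod.val_lt _⟩, hB1, ?_, hgc, hdvc⟩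
    · nlinarith [Nat.mod_lt x he, hD1]
    · exact Nat.Coprime.coprime_dvd_right (Nat.gcd_dvd_right _ _) hB1
  · -- left_inv
    rintro ⟨C1, B2, C2⟩ ha
    rw [Finset.mem_filter, Finset.mem_product, Finset.mem_product, Finset.mem_range,
      Finset.mem_range, Finset.mem_range] at ha
    obtain ⟨⟨hC1, hB2, hC2⟩, _, _, hg2, hdv⟩ := ha
    obtain ⟨-, -, g1, g2, g3, -, -⟩ :=
      master D1 e hsame m1 m2 n1 n2 B1 hB1 C1 B2 C2 hC1 hB2 hC2 hg2 hdv
    simp only [Prod.mk.injEq]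
    exact ⟨g1, g2, g3⟩
  · -- right_inv
    rintro x hx
    rw [Finset.mem_filter, Finset.mem_range] at hx
    obtain ⟨hxlt, hxg⟩ := hx
    have f3 : IsUnit (B1 : ZMod (D1*e)) := unit_of_gcd hB1D2
    have hβ : (B1 : ZMod (D1*e)) * (B1 : ZMod (D1*e))⁻¹ = 1 := ZMod.mul_inv_of_unit _ f3
    show ((-(((-((B1 : ZMod (D1*e)) * (x : ZMod (D1*e)))).val : ℕ) : ZMod (D1*e))) * (B1 : ZMod (D1*e))⁻¹).val = x
    have h1 : (-(((-((B1 : ZMod (D1*e)) * (x : ZMod (D1*e)))).val : ℕ) : ZMod (D1*e))) * (B1 : ZMod (D1*e))⁻¹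
        = (x : ZMod (D1*e)) := by
      rw [valcast]
      linear_combination (x : ZMod (D1*e)) * hβ
    rw [h1, ZMod.val_cast_of_lt hxlt]
  · -- terms
    rintro ⟨C1, B2, C2⟩ ha
    rw [Finset.mem_filter, Finset.mem_product, Finset.mem_product, Finset.mem_range,
      Finset.mem_range, Finset.mem_range] at ha
    obtain ⟨⟨hC1, hB2, hC2⟩, _, _, hg2, hdv⟩ := ha
    obtain ⟨hxlt, hxgcd, -, -, -, g4, g5⟩ :=
      master D1 e hsame m1 m2 n1 n2 B1 hB1 C1 B2 C2 hC1 hB2 hC2 hg2 hdv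
    rw [efn_add]
    congr 1
    · exact efn_congr (NeZero.ne D1) g4
    · exact efn_congr hD2ne g5

lemma Kl_zero_left (m : ℤ) (c : ℕ) [NeZero c] :
    Kl 0 m c = ∑ x ∈ Finset.range c, if Nat.gcd x c = 1 then efn (((m * x : ℤ) : ℝ) / c) else 0 := by
  unfold Kl
  rw [← Finset.sum_filter, ← Finset.sum_filter]
  refine Finset.sum_nbij' (fun x => ((x : ZMod c)⁻¹).val) (fun x => ((x : ZMod c)⁻¹).val)
    ?_ ?_ ?_ ?_ ?_
  · intro a ha
    rw [Finset.mem_filter, Finset.mem_range] at ha ⊢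
    exact ⟨ZMod.val_lt _, gcd_of_unit (unit_inv (unit_of_gcd ha.2))⟩
  · intro a ha
    rw [Finset.mem_filter, Finset.mem_range] at ha ⊢
    exact ⟨ZMod.val_lt _, gcd_of_unit (unit_inv (unit_of_gcd ha.2))⟩
  · intro a ha
    rw [Finset.mem_filter, Finset.mem_range] at ha
    show ((((((a : ZMod c)⁻¹).val) : ZMod c))⁻¹).val = a
    rw [valcast, inv_inv_unit (unit_of_gcd ha.2), ZMod.val_cast_of_lt ha.1]
  · intro a ha
    rw [Finset.mem_filter, Finset.mem_range] at ha
    show ((((((a : ZMod c)⁻¹).val) : ZMod c))⁻¹).val = a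
    rw [valcast, inv_inv_unit (unit_of_gcd ha.2), ZMod.val_cast_of_lt ha.1]
  · intro a ha
    congr 2
    push_cast
    ring

/-- `S₁ = S(0,m₁;D₁) · S(m₂D₁,n₂;D₂)` for `1 < D₁ ∣ D₂` with the same prime divisors. -/
theorem stmt2 (D1 D2 : ℕ) (h1 : 1 < D1) (hdvd : D1 ∣ D2)
    (hsame : ∀ p : ℕ, p.Prime → (p ∣ D1 ↔ p ∣ D2)) (m1 m2 n1 n2 : ℤ) :
    S1sub m1 m2 n1 n2 D1 D2 = Kl 0 m1 D1 * Kl (m2 * D1) n2 D2 := by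
  have hD1ne : D1 ≠ 0 := by omega
  haveI : NeZero D1 := ⟨hD1ne⟩
  have hD2ne : D2 ≠ 0 := by
    intro h0
    obtain ⟨p, hle, hp⟩ := Nat.exists_infinite_primes (D1 + 1)
    have hpD1 : p ∣ D1 := (hsame p hp).mpr (by rw [h0]; exact dvd_zero p)
    have := Nat.le_of_dvd (by omega) hpD1
    omega
  haveI : NeZero D2 := ⟨hD2ne⟩
  obtain ⟨e, hD2⟩ := hdvd
  subst hD2
  have hsame' : ∀ p : ℕ, p.Prime → (p ∣ (D1 * e) → p ∣ D1) := fun p pp h => (hsame p pp).mpr h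
  unfold S1sub
  calc (∑ B1 ∈ Finset.range D1, ∑ C1 ∈ Finset.range D1,
      ∑ B2 ∈ Finset.range (D1 * e), ∑ C2 ∈ Finset.range (D1 * e),
        if Nat.gcd B1 D1 = 1 ∧
           Nat.gcd B1 (Nat.gcd C1 D1) = 1 ∧ Nat.gcd B2 (Nat.gcd C2 (D1 * e)) = 1 ∧
           (D1 * (D1 * e)) ∣ (D1 * C2 + B1 * B2 + (D1 * e) * C1) then
          efn ((((m1 * B1 + n1 * (Ycoef B1 C1 D1 * ((D1 * e : ℕ) : ℤ) - Zcoef B1 C1 D1 * B2)) : ℤ) : ℝ) / D1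
            + (((m2 * B2 + n2 * (Ycoef B2 C2 (D1 * e) * D1 - Zcoef B2 C2 (D1 * e) * B1)) : ℤ) : ℝ) / ((D1 * e : ℕ) : ℝ))
        else 0)
      = ∑ B1 ∈ Finset.range D1,
          (if Nat.gcd B1 D1 = 1 then efn (((m1 * B1 : ℤ) : ℝ) / D1) else 0) * Kl (m2 * D1) n2 (D1 * e) := by
        refine Finset.sum_congr rfl fun B1 _ => ?_
        by_cases hB1 : Nat.gcd B1 D1 = 1
        · rw [if_pos hB1, innerSumEq D1 e hsame' m1 m2 n1 n2 B1 hB1]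
          rw [Kl, Finset.mul_sum]
          refine Finset.sum_congr rfl fun x _ => ?_
          rw [mul_ite, mul_zero]
        · rw [if_neg hB1]
          simp only [hB1, false_and, if_false, Finset.sum_const_zero, zero_mul]
    _ = (∑ B1 ∈ Finset.range D1,
          (if Nat.gcd B1 D1 = 1 then efn (((m1 * B1 : ℤ) : ℝ) / D1) else 0)) * Kl (m2 * D1) n2 (D1 * e) :=
        (Finset.sum_mul _ _ _).symm
    _ = Kl 0 m1 D1 * Kl (m2 * D1) n2 (D1 * e) := by rw [← Kl_zero_left]
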